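/- Let F/E be a quadratic field extension of characteristic-zero fields with nontrivial E-automorphism σ, and fix i ∈ F with σ(i) = −i and i² = −a for some nonzero a ∈ E. Let D = (−a,−b / E) be the quaternion E-algebra with generators i, j satisfying i² = −a, j² = −b, ji = −ij, and standard conjugation q ↦ q̄. Define the quaternionic Hermitian form φ_D : D × D → D by φ_D(q₁,q₂) = q₁·(q₂)̄. Then the group of F-linear automorphisms of D (viewed as a left F-vector space F ⊕ F·j) preserving φ_D is exactly the set of right multiplications {R(q) : q ∈ D, q·q̄ = 1}, where R(q)(d) = d·q. -/
import Mathlib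


open Quaternion

/-- Let `F = E(i)` be a quadratic extension of a characteristic-zero field `E` with
`i² = −a` (so `−a` is not a square in `E`), and let `D = (−a,−b/E)` be the quaternion algebra,
realized as `ℍ[E, -a, -b]`, viewed as a left `F`-vector space `F ⊕ F·j`; here `F ⊂ D` is the
set of quaternions `⟨x, y, 0, 0⟩ = x + y·i`.  Let `φ_D(q₁,q₂) = q₁·conj(q₂)`.  Then an
`F`-linear automorphism `u` of `D` preserves `φ_D` if and only if `u` is right multiplication
`R(q) : d ↦ d·q` by some `q ∈ D` with `q·conj(q) = 1`. -/
theorem aut_of_quaternionic_hermitian_form (E : Type) [Field E] [CharZero E] (a b : E)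
    (ha : a ≠ 0) (hb : b ≠ 0) (hquad : ∀ x : E, x ^ 2 ≠ -a)
    (u : ℍ[E, -a, -b] →ₗ[E] ℍ[E, -a, -b]) (hbij : Function.Bijective u)
    (hFlin : ∀ (x y : E) (d : ℍ[E, -a, -b]),
      u ((⟨x, y, 0, 0⟩ : ℍ[E, -a, -b]) * d) = (⟨x, y, 0, 0⟩ : ℍ[E, -a, -b]) * u d) :
    (∀ q₁ q₂ : ℍ[E, -a, -b], u q₁ * star (u q₂) = q₁ * star q₂) ↔
      ∃ q : ℍ[E, -a, -b], q * star q = 1 ∧ ∀ d, u d = d * q := by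
  constructor
  · intro h
    have hq : u 1 * star (u 1) = 1 := by simpa using h 1 1
    have hcomm : star (u 1) * u 1 = u 1 * star (u 1) := by ext <;> simp <;> ring
    refine ⟨u 1, hq, fun d => ?_⟩
    have hd : u d * star (u 1) = d := by simpa using h d 1
    calc u d = u d * (star (u 1) * u 1) := by rw [hcomm, hq, mul_one]
      _ = d * u 1 := by rw [← mul_assoc, hd]
  · rintro ⟨q, hq, hu⟩ q₁ q₂
    rw [hu, hu, star_mul, ← mul_assoc, mul_assoc q₁, hq, mul_one]
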